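/- Let X be a real Banach space in which every x ∈ S(X) is uniformly semidenting: for every ε > 0 there exists δ > 0 such that for any x ∈ S(X) there exists f ∈ S(X*) with S(B(X), f, δ) ⊆ B(x, ε). Then X* has the w*-UMIP: for every ε > 0 and M(ε) ≥ 2 there is K(ε) > 0 such that whenever a w*-compact convex set C ⊆ X* and f₀ ∈ X* satisfy diam(C) ≤ M(ε) and d(f₀, C) ≥ ε, there is a closed ball B ⊆ X* of radius ≤ K(ε) with C ⊆ B and d(f₀, B) ≥ ε/2. -/

import Mathlib

open NormedSpace

open Set LinearMap Submodule in
/-- A continuous linear functional on a weak-bilinear space is an evaluation. -/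
theorem weakBilin_dual_eval {E F : Type*} [AddCommGroup E] [Module ℝ E]
    [AddCommGroup F] [Module ℝ F] (B : E →ₗ[ℝ] F →ₗ[ℝ] ℝ)
    (G : WeakBilin B →L[ℝ] ℝ) : ∃ y : F, ∀ g : WeakBilin B, G g = B g y := by
  have h0 : {g : WeakBilin B | ‖G g‖ < 1} ∈ nhds (0 : WeakBilin B) := by
    have hc : Continuous fun g : WeakBilin B => ‖G g‖ := G.continuous.norm
    have : IsOpen {g : WeakBilin B | ‖G g‖ < 1} := isOpen_lt hc continuous_const
    exact this.mem_nhds (by simp)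
  obtain ⟨U, hU, hUsub⟩ := ((LinearMap.hasBasis_weakBilin B).mem_iff).1 h0
  obtain ⟨S, r, hr, rfl⟩ := (SeminormFamily.basisSets_iff _).1 hU
  have key : ∀ g : WeakBilin B, (∀ y ∈ S, B g y = 0) → G g = 0 := by
    intro g hg
    by_contra hne
    have h1 : ∀ τ : ℝ, ‖G (τ • g)‖ < 1 := by
      intro τ
      apply hUsub
      refine (Seminorm.mem_ball_zero (p := S.sup B.toSeminormFamily)).2 ?_
      refine lt_of_le_of_lt (Seminorm.finset_sup_apply_le le_rfl ?_) hr
      intro y hy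
      show ‖B (τ • (show E from g)) y‖ ≤ 0
      rw [map_smul, LinearMap.smul_apply, hg y hy]
      simp
    have h2 := h1 (‖G g‖)⁻¹
    rw [map_smul, smul_eq_mul, norm_mul, norm_inv, norm_norm,
      inv_mul_cancel₀ (by simpa using hne)] at h2
    exact absurd h2 (by norm_num)
  have hker : ⨅ i : S, LinearMap.ker ((B.flip (i : F)) : WeakBilin B →ₗ[ℝ] ℝ) ≤
      LinearMap.ker (G : WeakBilin B →ₗ[ℝ] ℝ) := by
    intro g hg
    rw [Submodule.mem_iInf] at hg
    show G g = 0
    refine key g fun y hy => ?_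
    have := hg ⟨y, hy⟩
    change (B.flip y) g = 0 at this
    simpa [LinearMap.flip_apply] using this
  have hspan := mem_span_of_iInf_ker_le_ker hker
  obtain ⟨c, hc⟩ := (mem_span_range_iff_exists_fun ℝ).1 hspan
  refine ⟨∑ i : S, c i • (i : F), fun g => ?_⟩
  have := congrArg (fun φ : WeakBilin B →ₗ[ℝ] ℝ => φ g) hc
  change (∑ i : S, c i • (B.flip (i : F) : E →ₗ[ℝ] ℝ)) (show E from g) = G g at this
  rw [LinearMap.sum_apply] at this
  simp only [LinearMap.coe_sum, Finset.sum_apply, LinearMap.smul_apply,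
    LinearMap.flip_apply, smul_eq_mul] at this
  rw [map_sum]
  simp only [map_smul, smul_eq_mul]
  exact this.symm

set_option maxHeartbeats 1000000 in
open Pointwise StrongDual Metric in
/-- If every unit vector of `X` is uniformly semidenting, then `X*` has the w*-UMIP. -/
theorem stmt_18 {X : Type*} [NormedAddCommGroup X] [NormedSpace ℝ X] [CompleteSpace X]
    (h : ∀ ε : ℝ, 0 < ε → ∃ δ : ℝ, 0 < δ ∧
      ∀ x : X, ‖x‖ = 1 → ∃ f : StrongDual ℝ X, ‖f‖ = 1 ∧
        {y : X | ‖y‖ ≤ 1 ∧ 1 - δ < f y} ⊆ Metric.ball x ε) :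
    ∀ ε : ℝ, 0 < ε → ∀ M : ℝ, 2 ≤ M → ∃ K : ℝ, 0 < K ∧
      ∀ (C : Set (StrongDual ℝ X)) (f₀ : StrongDual ℝ X),
        Convex ℝ C → IsCompact (StrongDual.toWeakDual '' C) →
        Metric.diam C ≤ M → (∀ g ∈ C, ε ≤ ‖f₀ - g‖) →
        ∃ (c : StrongDual ℝ X) (r : ℝ), r ≤ K ∧ C ⊆ Metric.closedBall c r ∧
          ∀ w ∈ Metric.closedBall c r, ε / 2 ≤ ‖f₀ - w‖ := by
  intro ε hε M hM
  set M' : ℝ := 2 * M + ε / 2 with hM'def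
  have hM'pos : (0 : ℝ) < M' := by simp only [hM'def]; linarith
  obtain ⟨δ₀, hδ₀, hsd⟩ := h (ε / (8 * M')) (by positivity)
  set δ : ℝ := min δ₀ 1 with hδdef
  have hδ : 0 < δ := lt_min hδ₀ one_pos
  have hδ1 : δ ≤ 1 := min_le_right _ _
  set t : ℝ := (M' + ε / 2) / δ with htdef
  have ht : 0 < t := by positivity
  have htδ : t * δ = M' + ε / 2 := div_mul_cancel₀ _ hδ.ne'
  have htM : M' + ε / 2 ≤ t := by
    nlinarith [mul_le_mul_of_nonneg_left hδ1 ht.le]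
  clear_value M' δ t
  have hKpos : 0 < max M t := lt_max_of_lt_right ht
  refine ⟨max M t, hKpos, ?_⟩
  intro C f₀ hconv hcpt hdiam hdist
  rcases C.eq_empty_or_nonempty with rfl | ⟨g₀, hg₀⟩
  · refine ⟨f₀, -1, by linarith, by simp, ?_⟩
    rw [Metric.closedBall_eq_empty.2 (by norm_num)]
    simp
  -- C is norm bounded, by Banach–Steinhaus
  have hCbdd : ∃ b : ℝ, ∀ g : C, ‖(g : StrongDual ℝ X)‖ ≤ b := by
    apply banach_steinhaus
    intro x
    have hc2 : IsCompact ((fun φ : WeakDual ℝ X => ‖φ x‖) '' (toWeakDual '' C)) :=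
      hcpt.image ((WeakDual.eval_continuous x).norm)
    obtain ⟨b, hb⟩ := hc2.bddAbove
    exact ⟨b, fun g => hb ⟨toWeakDual (g : StrongDual ℝ X), ⟨(g : StrongDual ℝ X), g.2, rfl⟩, rfl⟩⟩
  obtain ⟨b, hb⟩ := hCbdd
  have hCb : Bornology.IsBounded C := by
    apply Metric.isBounded_closedBall (x := (0 : StrongDual ℝ X)) (r := b) |>.subset
    intro g hg
    rw [Metric.mem_closedBall, dist_zero_right]
    exact hb ⟨g, hg⟩
  have hdg : ∀ g ∈ C, ‖g - g₀‖ ≤ M := by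
    intro g hg
    have := Metric.dist_le_diam_of_mem hCb hg hg₀
    rw [dist_eq_norm] at this
    linarith
  by_cases hfar : M + ε / 2 ≤ ‖f₀ - g₀‖
  · refine ⟨g₀, M, le_max_left _ _, ?_, ?_⟩
    · intro g hg
      rw [Metric.mem_closedBall, dist_eq_norm]
      exact hdg g hg
    · intro w hw
      rw [Metric.mem_closedBall, dist_eq_norm] at hw
      have h3 : ‖f₀ - g₀‖ ≤ ‖f₀ - w‖ + ‖w - g₀‖ := by
        calc ‖f₀ - g₀‖ = ‖(f₀ - w) + (w - g₀)‖ := by rw [sub_add_sub_cancel]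
          _ ≤ ‖f₀ - w‖ + ‖w - g₀‖ := norm_add_le _ _
      linarith
  push_neg at hfar
  have hbC : ∀ g ∈ C, ‖g - f₀‖ ≤ M' := by
    intro g hg
    have : ‖g - f₀‖ ≤ ‖g - g₀‖ + ‖g₀ - f₀‖ := by
      calc ‖g - f₀‖ = ‖(g - g₀) + (g₀ - f₀)‖ := by rw [sub_add_sub_cancel]
        _ ≤ _ := norm_add_le _ _
    rw [norm_sub_rev g₀ f₀] at this
    have := hdg g hg
    simp only [hM'def]
    linarith
  -- the separating sets in the weak dual
  set A : Set (WeakDual ℝ X) := toWeakDual '' ((fun g => g - f₀) '' C) with hAdef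
  have hAcpt : IsCompact A := by
    have himg : A = (fun φ : WeakDual ℝ X => φ - toWeakDual f₀) '' (toWeakDual '' C) := by
      rw [hAdef, Set.image_image, Set.image_image]
      apply Set.image_congr
      intro g _
      exact map_sub toWeakDual g f₀
    rw [himg]
    exact hcpt.image (continuous_id.sub continuous_const)
  have hAconv : Convex ℝ A := by
    apply Convex.linear_image _ (toWeakDual : StrongDual ℝ X ≃ₗ[ℝ] WeakDual ℝ X).toLinearMap
    have : ((fun g : StrongDual ℝ X => g - f₀) '' C) = (fun g : StrongDual ℝ X => -f₀ + g) '' C := by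
      apply Set.image_congr; intro g _; abel
    rw [this]
    exact hconv.translate _
  set Bset : Set (WeakDual ℝ X) :=
    WeakDual.toStrongDual (𝕜 := ℝ) (E := X) ⁻¹'
      (Metric.closedBall (0 : StrongDual ℝ X) (3 * ε / 4)) with hBdef
  have hBmem : ∀ φ : StrongDual ℝ X, ‖φ‖ ≤ 3 * ε / 4 → toWeakDual φ ∈ Bset := by
    intro φ hφ
    have hcoe : WeakDual.toStrongDual (toWeakDual φ) = φ := rfl
    show WeakDual.toStrongDual (toWeakDual φ) ∈ Metric.closedBall (0 : StrongDual ℝ X) (3 * ε / 4)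
    rw [hcoe, mem_closedBall_zero_iff]
    exact hφ
  have hBcpt : IsCompact Bset := WeakDual.isCompact_closedBall (𝕜 := ℝ) (E := X) 0 (3 * ε / 4)
  have hBconv : Convex ℝ Bset :=
    (convex_closedBall (0 : StrongDual ℝ X) (3 * ε / 4)).linear_preimage
      (WeakDual.toStrongDual : WeakDual ℝ X ≃ₗ[ℝ] StrongDual ℝ X).toLinearMap
  set D : Set (WeakDual ℝ X) := A + Bset with hDdef
  have hDcpt : IsCompact D := hAcpt.add hBcpt
  have hDconv : Convex ℝ D := hAconv.add hBconv
  have hDclosed : IsClosed D := hDcpt.isClosed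
  have h0D : (0 : WeakDual ℝ X) ∉ D := by
    rintro ⟨a, ⟨a', ⟨g, hg, rfl⟩, rfl⟩, bb, hbb, hab⟩
    have hb' : ‖WeakDual.toStrongDual bb‖ ≤ 3 * ε / 4 := mem_closedBall_zero_iff.1 hbb
    have hab' : toWeakDual (g - f₀) + bb = 0 := hab
    have heq : (g - f₀) + WeakDual.toStrongDual bb = 0 := by
      have h5 : WeakDual.toStrongDual (toWeakDual (g - f₀) + bb) = WeakDual.toStrongDual 0 := by
        rw [hab']
      rwa [map_add, map_zero, WeakDual.toStrongDual, LinearEquiv.symm_apply_apply] at h5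
    have h1 : ‖g - f₀‖ ≤ 3 * ε / 4 := by
      rw [eq_neg_of_add_eq_zero_left heq, norm_neg]
      exact hb'
    have h2 : ε ≤ ‖g - f₀‖ := by rw [norm_sub_rev]; exact hdist g hg
    linarith
  haveI : LocallyConvexSpace ℝ (WeakDual ℝ X) :=
    WeakBilin.locallyConvexSpace (B := topDualPairing ℝ X)
  obtain ⟨F, u, hu0, huD⟩ := geometric_hahn_banach_point_closed hDconv hDclosed h0D
  have hu : 0 < u := by simpa using hu0
  obtain ⟨x₀, hx₀⟩ := weakBilin_dual_eval (topDualPairing ℝ X) F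
  have hF : ∀ φ : StrongDual ℝ X, F (toWeakDual φ) = φ x₀ := fun φ => hx₀ (toWeakDual φ)
  have hBzero : (0 : WeakDual ℝ X) ∈ Bset := by
    have hcoe : WeakDual.toStrongDual (0 : WeakDual ℝ X) = (0 : StrongDual ℝ X) := rfl
    show WeakDual.toStrongDual (0 : WeakDual ℝ X) ∈ Metric.closedBall (0 : StrongDual ℝ X) (3 * ε / 4)
    rw [hcoe, mem_closedBall_zero_iff, norm_zero]
    positivity
  have hAmem : ∀ g ∈ C, toWeakDual (g - f₀) ∈ A := fun g hg => ⟨g - f₀, ⟨g, hg, rfl⟩, rfl⟩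
  have hx₀ne : x₀ ≠ 0 := by
    intro h0
    have hmem : toWeakDual (g₀ - f₀) + 0 ∈ D := Set.add_mem_add (hAmem g₀ hg₀) hBzero
    have h6 := huD _ hmem
    rw [add_zero, hF] at h6
    rw [h0, map_zero] at h6
    linarith
  obtain ⟨j, hj1, hjx⟩ := exists_dual_vector ℝ x₀ (norm_ne_zero_iff.2 hx₀ne)
  have hn : 0 < ‖x₀‖ := norm_pos_iff.2 hx₀ne
  have hsep : ∀ g ∈ C, 3 * ε / 4 * ‖x₀‖ < (g - f₀) x₀ := by
    intro g hg
    have hbmem : toWeakDual (-(3 * ε / 4) • j) ∈ Bset := by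
      apply hBmem
      rw [norm_smul, hj1, norm_neg, Real.norm_eq_abs, abs_of_nonneg (by positivity)]
      simp
    have hmem : toWeakDual (g - f₀) + toWeakDual (-(3 * ε / 4) • j) ∈ D :=
      Set.add_mem_add (hAmem g hg) hbmem
    have hud := huD _ hmem
    rw [← map_add, hF] at hud
    have heval : ((g - f₀) + -(3 * ε / 4) • j) x₀
        = (g - f₀) x₀ - (3 * ε / 4) * ‖x₀‖ := by
      rw [ContinuousLinearMap.add_apply, ContinuousLinearMap.smul_apply, hjx]
      simp
      ring
    rw [heval] at hud
    linarith
  set xh : X := ‖x₀‖⁻¹ • x₀ with hxhdef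
  have hxh : ‖xh‖ = 1 := norm_smul_inv_norm hx₀ne
  have hsep' : ∀ g ∈ C, 3 * ε / 4 ≤ (g - f₀) xh := by
    intro g hg
    have h1 := hsep g hg
    have h2 : (g - f₀) xh = ‖x₀‖⁻¹ * ((g - f₀) x₀) := by
      rw [hxhdef, map_smul]; simp
    have h9 : ‖x₀‖⁻¹ * (3 * ε / 4 * ‖x₀‖) ≤ ‖x₀‖⁻¹ * ((g - f₀) x₀) :=
      mul_le_mul_of_nonneg_left h1.le (by positivity)
    have h10 : ‖x₀‖⁻¹ * (3 * ε / 4 * ‖x₀‖) = 3 * ε / 4 := by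
      field_simp
    rw [h2]
    linarith
  obtain ⟨f, hf1, hslice⟩ := hsd xh hxh
  -- the key estimate
  have claim : ∀ g ∈ C, ∀ z : X, ‖z‖ = 1 → t * f z - (g - f₀) z ≤ t - ε / 2 := by
    intro g hg z hz
    by_cases hcase : 1 - δ < f z
    · have hz' : z ∈ {y : X | ‖y‖ ≤ 1 ∧ 1 - δ₀ < f y} := by
        refine ⟨hz.le, lt_of_le_of_lt ?_ hcase⟩
        have : δ ≤ δ₀ := by rw [hδdef]; exact min_le_left _ _
        linarith
      have hzb := hslice hz'
      rw [Metric.mem_ball, dist_eq_norm] at hzb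
      have h2 : ‖(g - f₀) (z - xh)‖ ≤ M' * (ε / (8 * M')) := by
        calc ‖(g - f₀) (z - xh)‖ ≤ ‖g - f₀‖ * ‖z - xh‖ :=
              ContinuousLinearMap.le_opNorm _ _
          _ ≤ M' * (ε / (8 * M')) := by
              apply mul_le_mul (hbC g hg) hzb.le (norm_nonneg _) hM'pos.le
      have hM'ε : M' * (ε / (8 * M')) = ε / 8 := by
        field_simp
      have haz : 3 * ε / 4 - ε / 8 ≤ (g - f₀) z := by
        have h1 : (g - f₀) z = (g - f₀) xh + (g - f₀) (z - xh) := by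
          rw [← map_add]
          congr 1
          abel
        have h3 := abs_le.1 (hM'ε ▸ h2 : |(g - f₀) (z - xh)| ≤ ε / 8)
        have h4 := hsep' g hg
        rw [h1]
        linarith [h3.1]
      have hfz : t * f z ≤ t := by
        have hfz1 : f z ≤ 1 := by
          have : ‖f z‖ ≤ ‖f‖ * ‖z‖ := ContinuousLinearMap.le_opNorm _ _
          rw [hf1, hz, one_mul] at this
          exact (le_abs_self _).trans this
        nlinarith
      linarith
    · push_neg at hcase
      have h1 : t * f z ≤ t * (1 - δ) := mul_le_mul_of_nonneg_left hcase ht.le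
      have h2 : -((g - f₀) z) ≤ M' := by
        have : ‖(g - f₀) z‖ ≤ ‖g - f₀‖ * ‖z‖ := ContinuousLinearMap.le_opNorm _ _
        rw [hz, mul_one] at this
        have h3 := (abs_le.1 ((this.trans (hbC g hg)) : |(g - f₀) z| ≤ M')).1
        linarith
      have h4 : t * (1 - δ) = t - (M' + ε / 2) := by rw [mul_sub, mul_one, htδ]
      linarith
  refine ⟨f₀ + t • f, t - ε / 2, ?_, ?_, ?_⟩
  · have : t ≤ max M t := le_max_right _ _
    linarith
  · intro g hg
    rw [Metric.mem_closedBall, dist_eq_norm]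
    have heq : g - (f₀ + t • f) = (g - f₀) - t • f := by abel
    rw [heq]
    apply ContinuousLinearMap.opNorm_le_of_unit_norm (by linarith : (0:ℝ) ≤ t - ε / 2)
    intro y hy
    have hyneg : ‖-y‖ = 1 := by rw [norm_neg]; exact hy
    have c1 := claim g hg y hy
    have c2 := claim g hg (-y) hyneg
    have e1 : ((g - f₀) - t • f) y = (g - f₀) y - t * f y := by
      rw [ContinuousLinearMap.sub_apply, ContinuousLinearMap.smul_apply]
      simp
    have e2 : f (-y) = -(f y) := map_neg f y
    have e3 : (g - f₀) (-y) = -((g - f₀) y) := map_neg _ y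
    rw [e1, Real.norm_eq_abs, abs_le]
    constructor
    · linarith
    · rw [e2, e3] at c2
      linarith
  · intro w hw
    rw [Metric.mem_closedBall, dist_eq_norm] at hw
    have h1 : ‖f₀ - (f₀ + t • f)‖ = t := by
      simp [norm_smul, hf1, abs_of_nonneg ht.le]
    have h2 : ‖f₀ - (f₀ + t • f)‖ ≤ ‖f₀ - w‖ + ‖w - (f₀ + t • f)‖ := by
      calc ‖f₀ - (f₀ + t • f)‖ = ‖(f₀ - w) + (w - (f₀ + t • f))‖ := by rw [sub_add_sub_cancel]
        _ ≤ _ := norm_add_le _ _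
    rw [h1] at h2
    linarith
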